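/- arXiv:0803.0471 — 7 statements merged into one kernel-verified Lean document; each statement's English description precedes it below -/
import Mathlib

section
/- Let h be the class number of K and let z ≥ 1 be a real number. If a nonzero principal ideal I of 𝒪_K is a product of finitely many prime ideals of 𝒪_K, each of norm at most z, then I is a product of finitely many nonzero principal ideals of 𝒪_K, each of norm at most z^h. -/
set_option synthInstance.maxHeartbeats 1000000
set_option maxHeartbeats 1000000

open NumberField
open scoped nonZeroDivisors

lemma sr4_norm_le (K : Type) [Field K] [NumberField K] (z : ℝ) (hz : 1 ≤ z)
    (l : List (Ideal (𝓞 K))) (h : ∀ P ∈ l, (Ideal.absNorm P : ℝ) ≤ z) :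
    (Ideal.absNorm l.prod : ℝ) ≤ z ^ l.length := by
  induction l with
  | nil => simp
  | cons a l ih =>
    rw [List.prod_cons, List.length_cons, _root_.map_mul, pow_succ']
    push_cast
    exact mul_le_mul (h a List.mem_cons_self)
      (ih fun P hP => h P (List.mem_cons_of_mem a hP))
      (by positivity) (le_trans zero_le_one hz)

lemma sr4_prod_ne_bot (K : Type) [Field K] [NumberField K]
    (l : List (Ideal (𝓞 K))) (h : ∀ P ∈ l, P ≠ ⊥) : l.prod ≠ ⊥ := by
  induction l with
  | nil => simpa [Ideal.one_eq_top] using top_ne_bot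
  | cons a l ih =>
    rw [List.prod_cons, Ne, Ideal.mul_eq_bot]
    push_neg
    exact ⟨h a List.mem_cons_self, ih fun P hP => h P (List.mem_cons_of_mem a hP)⟩

lemma sr4_mk0_mul (K : Type) [Field K] [NumberField K]
    (I J : Ideal (𝓞 K)) (hI : I ∈ (Ideal (𝓞 K))⁰) (hJ : J ∈ (Ideal (𝓞 K))⁰) :
    ClassGroup.mk0 ⟨I * J, mul_mem hI hJ⟩ = ClassGroup.mk0 ⟨I, hI⟩ * ClassGroup.mk0 ⟨J, hJ⟩ := by
  rw [← _root_.map_mul]; rfl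

lemma sr4_aux (K : Type) [Field K] [NumberField K] (z : ℝ) (hz : 1 ≤ z) :
    ∀ n (l : List (Ideal (𝓞 K))), l.length = n →
      (∀ P ∈ l, P ≠ ⊥ ∧ (Ideal.absNorm P : ℝ) ≤ z) → l.prod.IsPrincipal →
      ∃ t : Multiset (Ideal (𝓞 K)),
        (∀ J ∈ t, J.IsPrincipal ∧ J ≠ ⊥ ∧
          (Ideal.absNorm J : ℝ) ≤ z ^ (NumberField.classNumber K)) ∧
        l.prod = t.prod := by
  intro n
  induction n using Nat.strong_induction_on with
  | _ n ih =>
  intro l hlen hl hprin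
  set h := NumberField.classNumber K with hh
  by_cases hle : l.length ≤ h
  · refine ⟨{l.prod}, ?_, by simp⟩
    intro J hJ
    rw [Multiset.mem_singleton] at hJ
    subst hJ
    refine ⟨hprin, sr4_prod_ne_bot K l fun P hP => (hl P hP).1, ?_⟩
    calc (Ideal.absNorm l.prod : ℝ) ≤ z ^ l.length :=
          sr4_norm_le K z hz l fun P hP => (hl P hP).2
      _ ≤ z ^ h := pow_le_pow_right₀ hz hle
  · push_neg at hle
    have hmem : ∀ m : ℕ, (l.take m).prod ∈ (Ideal (𝓞 K))⁰ := by
      intro m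
      rw [mem_nonZeroDivisors_iff_ne_zero]
      exact sr4_prod_ne_bot K _ fun P hP => (hl P (List.mem_of_mem_take hP)).1
    set f : Fin (h + 1) → ClassGroup (𝓞 K) :=
      fun i => ClassGroup.mk0 ⟨(l.take i).prod, hmem i⟩ with hf
    have hcard : Fintype.card (ClassGroup (𝓞 K)) < Fintype.card (Fin (h + 1)) := by
      simp [hh, NumberField.classNumber]
    obtain ⟨i, j, hij, hfij⟩ := Fintype.exists_ne_map_eq_of_card_lt f hcard
    wlog hlt : (i : ℕ) < (j : ℕ) generalizing i j
    · refine this j i hij.symm hfij.symm ?_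
      have := Fin.val_ne_of_ne hij
      omega
    set b := (l.take (j : ℕ)).drop (i : ℕ) with hb
    have hsplit : l.take (j : ℕ) = l.take (i : ℕ) ++ b := by
      conv_lhs => rw [← List.take_append_drop (i : ℕ) (l.take (j : ℕ))]
      rw [List.take_take, min_eq_left hlt.le, hb]
    have hbprod : (l.take (j : ℕ)).prod = (l.take (i : ℕ)).prod * b.prod := by
      conv_lhs => rw [hsplit]
      rw [List.prod_append]
    have hbmem_l : ∀ P ∈ b, P ∈ l := fun P hP =>
      List.mem_of_mem_take (List.mem_of_mem_drop hP)
    have hbne : b.prod ∈ (Ideal (𝓞 K))⁰ := by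
      rw [mem_nonZeroDivisors_iff_ne_zero]
      exact sr4_prod_ne_bot K _ fun P hP => (hl P (hbmem_l P hP)).1
    have hb1 : ClassGroup.mk0 ⟨b.prod, hbne⟩ = 1 := by
      have : f j = f i * ClassGroup.mk0 ⟨b.prod, hbne⟩ := by
        rw [hf]
        dsimp only
        rw [← sr4_mk0_mul]
        congr 1
        exact Subtype.ext hbprod
      rw [hfij, left_eq_mul] at this
      exact this
    have hbprin : b.prod.IsPrincipal :=
      (ClassGroup.mk0_eq_one_iff hbne).mp hb1
    set r := l.take (i : ℕ) ++ l.drop (j : ℕ) with hr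
    have hlprod : l.prod = b.prod * r.prod := by
      conv_lhs => rw [← List.take_append_drop (j : ℕ) l, hsplit]
      rw [hr, List.prod_append, List.prod_append, List.prod_append]
      ring
    have hrmem_l : ∀ P ∈ r, P ∈ l := by
      intro P hP
      rcases List.mem_append.mp hP with h1 | h1
      · exact List.mem_of_mem_take h1
      · exact List.mem_of_mem_drop h1
    have hrne : r.prod ∈ (Ideal (𝓞 K))⁰ := by
      rw [mem_nonZeroDivisors_iff_ne_zero]
      exact sr4_prod_ne_bot K _ fun P hP => (hl P (hrmem_l P hP)).1
    have hlne : l.prod ∈ (Ideal (𝓞 K))⁰ := by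
      rw [mem_nonZeroDivisors_iff_ne_zero]
      exact sr4_prod_ne_bot K _ fun P hP => (hl P hP).1
    have hrprin : r.prod.IsPrincipal := by
      rw [← ClassGroup.mk0_eq_one_iff hrne]
      have hl1 : ClassGroup.mk0 ⟨l.prod, hlne⟩ = 1 := by
        rw [ClassGroup.mk0_eq_one_iff]
        exact hprin
      rw [show (⟨l.prod, hlne⟩ : (Ideal (𝓞 K))⁰) =
          ⟨b.prod * r.prod, mul_mem hbne hrne⟩ from Subtype.ext hlprod,
        sr4_mk0_mul K _ _ hbne hrne, hb1, one_mul] at hl1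
      exact hl1
    have hjlen : (j : ℕ) ≤ l.length := le_trans (by omega) hle.le
    have hblen : b.length = (j : ℕ) - (i : ℕ) := by
      rw [hb, List.length_drop, List.length_take, min_eq_left hjlen]
    have hrlen : r.length < n := by
      rw [hr, List.length_append, List.length_take, List.length_drop,
        min_eq_left (le_trans hlt.le hjlen)]
      omega
    obtain ⟨t, ht, hteq⟩ := ih r.length hrlen r rfl
      (fun P hP => hl P (hrmem_l P hP)) hrprin
    refine ⟨b.prod ::ₘ t, ?_, ?_⟩
    · intro J hJ
      rcases Multiset.mem_cons.mp hJ with h1 | h1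
      · subst h1
        refine ⟨hbprin, mem_nonZeroDivisors_iff_ne_zero.mp hbne, ?_⟩
        calc (Ideal.absNorm b.prod : ℝ) ≤ z ^ b.length :=
              sr4_norm_le K z hz b fun P hP => (hl P (hbmem_l P hP)).2
          _ ≤ z ^ h := pow_le_pow_right₀ hz (by omega)
      · exact ht J h1
    · rw [Multiset.prod_cons, hlprod, hteq]

/-- Let `h` be the class number of `K` and `z ≥ 1`.  If a nonzero
principal ideal `I` of `𝒪_K` is a product of finitely many prime ideals, each of norm at
most `z`, then `I` is a product of finitely many nonzero principal ideals, each of norm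
at most `z^h`. -/
theorem smoothness_roots_stmt4 (K : Type) [Field K] [NumberField K]
    (z : ℝ) (hz : 1 ≤ z)
    (I : Ideal (𝓞 K)) (hIprin : I.IsPrincipal) (hIbot : I ≠ ⊥)
    (s : Multiset (Ideal (𝓞 K)))
    (hs : ∀ P ∈ s, P.IsPrime ∧ (Ideal.absNorm P : ℝ) ≤ z)
    (hprod : I = s.prod) :
    ∃ t : Multiset (Ideal (𝓞 K)),
      (∀ J ∈ t, J.IsPrincipal ∧ J ≠ ⊥ ∧
        (Ideal.absNorm J : ℝ) ≤ z ^ (NumberField.classNumber K)) ∧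
      I = t.prod := by
  have hsl : s.toList.prod = s.prod := by
    rw [← Multiset.prod_toList]
  have hPbot : ∀ P ∈ s, P ≠ ⊥ := by
    intro P hP hPb
    apply hIbot
    rw [hprod]
    have h0 : (0 : Ideal (𝓞 K)) ∈ s := by rw [Submodule.zero_eq_bot]; exact hPb ▸ hP
    rw [← Submodule.zero_eq_bot]
    exact Multiset.prod_eq_zero h0
  obtain ⟨t, ht, hteq⟩ := sr4_aux K z hz s.toList.length s.toList rfl
    (fun P hP => ⟨hPbot P (by rwa [← Multiset.mem_toList]),
      (hs P (by rwa [← Multiset.mem_toList])).2⟩)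
    (by rw [hsl, ← hprod]; exact hIprin)
  exact ⟨t, ht, by rw [hprod, ← hsl, hteq]⟩
end

section
/- For all real x > 0 and y ≥ 1, one has ψ'_K(x, y^(1/h)) ≤ ψ̃_K(x, y), where h is the class number of K. That is, every nonzero principal ideal of norm at most x that is a product of prime ideals of norm at most y^(1/h) is also a product of principal ideals of norm at most y. -/
set_option synthInstance.maxHeartbeats 1000000
set_option maxHeartbeats 1000000

open NumberField

/-- `ψ'_K(x, y)`: the number of nonzero principal ideals of `𝒪_K` of norm at most `x`
that are products of prime ideals of norm at most `y`. -/
noncomputable def psiPrimeK (K : Type) [Field K] [NumberField K] (x y : ℝ) : ℕ :=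
  Set.ncard {I : Ideal (𝓞 K) | I ≠ ⊥ ∧ I.IsPrincipal ∧ (Ideal.absNorm I : ℝ) ≤ x ∧
    ∃ s : Multiset (Ideal (𝓞 K)),
      (∀ P ∈ s, P.IsPrime ∧ (Ideal.absNorm P : ℝ) ≤ y) ∧ I = s.prod}

/-- `ψ̃_K(x, y)`: the number of nonzero principal ideals of `𝒪_K` of norm at most `x` that
are products of principal ideals of norm at most `y`. -/
noncomputable def psiTildeK (K : Type) [Field K] [NumberField K] (x y : ℝ) : ℕ :=
  Set.ncard {I : Ideal (𝓞 K) | I ≠ ⊥ ∧ I.IsPrincipal ∧ (Ideal.absNorm I : ℝ) ≤ x ∧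
    ∃ s : Multiset (Ideal (𝓞 K)),
      (∀ J ∈ s, J.IsPrincipal ∧ (Ideal.absNorm J : ℝ) ≤ y) ∧ I = s.prod}


section Aux

variable (K : Type) [Field K] [NumberField K]

open scoped Classical in
/-- The class of an ideal, sending `⊥` to `1`. -/
noncomputable def clsK (I : Ideal (𝓞 K)) : ClassGroup (𝓞 K) :=
  if h : I = 0 then 1 else ClassGroup.mk0 ⟨I, mem_nonZeroDivisors_of_ne_zero h⟩

lemma clsK_eq_one_iff {I : Ideal (𝓞 K)} (hI : I ≠ 0) :
    clsK K I = 1 ↔ I.IsPrincipal := by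
  rw [clsK, dif_neg hI]
  exact ClassGroup.mk0_eq_one_iff _

lemma clsK_one : clsK K 1 = 1 := by
  rw [clsK, dif_neg (one_ne_zero)]
  have : (⟨(1 : Ideal (𝓞 K)), mem_nonZeroDivisors_of_ne_zero one_ne_zero⟩ :
      nonZeroDivisors (Ideal (𝓞 K))) = 1 := rfl
  rw [this, map_one]

lemma clsK_mul {I J : Ideal (𝓞 K)} (hI : I ≠ 0) (hJ : J ≠ 0) :
    clsK K (I * J) = clsK K I * clsK K J := by
  rw [clsK, clsK, clsK, dif_neg hI, dif_neg hJ, dif_neg (mul_ne_zero hI hJ)]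
  have : (⟨I * J, mem_nonZeroDivisors_of_ne_zero (mul_ne_zero hI hJ)⟩ :
        nonZeroDivisors (Ideal (𝓞 K))) =
      ⟨I, mem_nonZeroDivisors_of_ne_zero hI⟩ * ⟨J, mem_nonZeroDivisors_of_ne_zero hJ⟩ := rfl
  rw [this, map_mul]

lemma clsK_list_prod (l : List (Ideal (𝓞 K))) (h : ∀ P ∈ l, P ≠ 0) :
    clsK K l.prod = (l.map (clsK K)).prod := by
  induction l with
  | nil => simpa using clsK_one K
  | cons a l ih =>
    have ha : a ≠ 0 := h a List.mem_cons_self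
    have hl : ∀ P ∈ l, P ≠ 0 := fun P hP => h P (List.mem_cons_of_mem a hP)
    have hlp : l.prod ≠ 0 := by
      intro h0
      exact hl 0 (List.prod_eq_zero_iff.mp h0) rfl
    rw [List.prod_cons, clsK_mul K ha hlp, ih hl, List.map_cons, List.prod_cons]

lemma multiset_prod_le_pow (u : Multiset ℝ) (z : ℝ) (hz : 1 ≤ z)
    (h : ∀ a ∈ u, 0 ≤ a ∧ a ≤ z) : u.prod ≤ z ^ Multiset.card u := by
  induction u using Multiset.induction with
  | empty => simp
  | cons a s ih =>
    have ha := h a (Multiset.mem_cons_self a s)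
    have hs : ∀ b ∈ s, 0 ≤ b ∧ b ≤ z := fun b hb => h b (Multiset.mem_cons_of_mem hb)
    have hsn : 0 ≤ s.prod := Multiset.prod_nonneg fun b hb => (hs b hb).1
    rw [Multiset.prod_cons, Multiset.card_cons, pow_succ']
    exact mul_le_mul ha.2 (ih hs) hsn (le_trans zero_le_one hz)

end Aux

section Main

variable (K : Type) [Field K] [NumberField K]

lemma exists_sub_principal (s : Multiset (Ideal (𝓞 K))) (hs : s ≠ 0)
    (hs0 : ∀ P ∈ s, P ≠ 0) (hprin : s.prod.IsPrincipal) :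
    ∃ u : Multiset (Ideal (𝓞 K)),
      u ≤ s ∧ u ≠ 0 ∧ Multiset.card u ≤ classNumber K ∧ u.prod.IsPrincipal := by
  by_cases hc : Multiset.card s ≤ classNumber K
  · exact ⟨s, le_refl _, hs, hc, hprin⟩
  push_neg at hc
  set h := classNumber K with hh
  set l := s.toList with hl
  have hlen : l.length = Multiset.card s := Multiset.length_toList s
  have hls : (↑l : Multiset (Ideal (𝓞 K))) = s := Multiset.coe_toList s
  set f : Fin (h + 1) → ClassGroup (𝓞 K) :=
    fun k => ((l.take k).map (clsK K)).prod with hf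
  have hcard : Fintype.card (ClassGroup (𝓞 K)) < Fintype.card (Fin (h + 1)) := by
    simp [Fintype.card_fin, hh, classNumber]
  obtain ⟨i, j, hij, hfij⟩ := Fintype.exists_ne_map_eq_of_card_lt f hcard
  have key : ∀ i j : Fin (h + 1), i < j → f i = f j →
      ∃ u : Multiset (Ideal (𝓞 K)),
        u ≤ s ∧ u ≠ 0 ∧ Multiset.card u ≤ classNumber K ∧ u.prod.IsPrincipal := by
    intro i j hlt hfeq
    have hjh : (j : ℕ) ≤ h := Nat.lt_succ_iff.mp j.isLt
    have hjlen : (j : ℕ) ≤ l.length := by omega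
    set seg := (l.drop i).take ((j : ℕ) - i) with hseg
    have htake : l.take j = l.take i ++ seg := by
      have hij' : (i : ℕ) + ((j : ℕ) - i) = j := by omega
      rw [← hij', List.take_add]
    have hseg_sub : seg.Sublist l := (List.take_sublist _ _).trans (List.drop_sublist _ _)
    have hseg_mem : ∀ P ∈ seg, P ∈ s := by
      intro P hP
      rw [← hls]
      exact hseg_sub.subset hP
    have hseg_ne : ∀ P ∈ seg, P ≠ 0 := fun P hP => hs0 P (hseg_mem P hP)
    have hlenseg : seg.length = (j : ℕ) - i := by
      rw [hseg, List.length_take, List.length_drop]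
      omega
    have hsegprod_ne : seg.prod ≠ 0 := by
      intro h0
      exact hseg_ne 0 (List.prod_eq_zero_iff.mp h0) rfl
    refine ⟨↑seg, ?_, ?_, ?_, ?_⟩
    · rw [← hls]
      exact Multiset.coe_le.mpr hseg_sub.subperm
    · rw [Ne, Multiset.coe_eq_zero]
      intro h0
      rw [h0] at hlenseg
      simp at hlenseg
      omega
    · rw [Multiset.coe_card, hlenseg]
      omega
    · have hps : (↑seg : Multiset (Ideal (𝓞 K))).prod = seg.prod := by
        simp
      rw [hps, ← clsK_eq_one_iff K hsegprod_ne, clsK_list_prod K seg hseg_ne]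
      have hfj : f j = f i * (seg.map (clsK K)).prod := by
        rw [hf]
        simp only
        rw [htake, List.map_append, List.prod_append]
      have : f i * (seg.map (clsK K)).prod = f i * 1 := by
        rw [mul_one, ← hfj, hfeq]
      exact mul_left_cancel this
  rcases hij.lt_or_gt with hlt | hlt
  · exact key i j hlt hfij
  · exact key j i hlt hfij.symm

lemma exists_principal_decomp (y : ℝ) (hy : 1 ≤ y) (n : ℕ) :
    ∀ s : Multiset (Ideal (𝓞 K)), Multiset.card s ≤ n → s.prod ≠ 0 →
    (∀ P ∈ s, (Ideal.absNorm P : ℝ) ≤ y ^ ((1 : ℝ) / (classNumber K : ℝ))) →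
    s.prod.IsPrincipal →
    ∃ t : Multiset (Ideal (𝓞 K)),
      (∀ J ∈ t, J.IsPrincipal ∧ (Ideal.absNorm J : ℝ) ≤ y) ∧ s.prod = t.prod := by
  have hcpos : 0 < classNumber K := Fintype.card_pos
  set z := y ^ ((1 : ℝ) / (classNumber K : ℝ)) with hz
  have hy0 : (0 : ℝ) ≤ y := le_trans zero_le_one hy
  have hz1 : 1 ≤ z := Real.one_le_rpow hy (by positivity)
  have hzh : z ^ (classNumber K) = y := by
    rw [hz, ← Real.rpow_natCast (y ^ ((1 : ℝ) / (classNumber K : ℝ))) (classNumber K),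
      ← Real.rpow_mul hy0]
    rw [one_div_mul_cancel (by exact_mod_cast hcpos.ne'), Real.rpow_one]
  induction n with
  | zero =>
    intro s hcard _ _ _
    have hs : s = 0 := by
      rw [← Multiset.card_eq_zero]
      omega
    exact ⟨0, by simp, by rw [hs]⟩
  | succ n ih =>
    intro s hcard hs0 hnorm hprin
    by_cases hsz : s = 0
    · exact ⟨0, by simp, by rw [hsz]⟩
    have hne : ∀ P ∈ s, P ≠ 0 := by
      intro P hP h0
      exact hs0 (Multiset.prod_eq_zero (h0 ▸ hP))
    obtain ⟨u, hus, hu0, hucard, huprin⟩ := exists_sub_principal K s hsz hne hprin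
    classical
    set v := s - u with hv
    have hsuv : s = v + u := (tsub_add_cancel_of_le hus).symm
    have hprod : s.prod = v.prod * u.prod := by rw [hsuv, Multiset.prod_add]
    have hv0 : v.prod ≠ 0 := fun h0 => hs0 (by rw [hprod, h0, zero_mul])
    have hu0' : u.prod ≠ 0 := fun h0 => hs0 (by rw [hprod, h0, mul_zero])
    have hvprin : v.prod.IsPrincipal := by
      rw [← clsK_eq_one_iff K hv0]
      have h1 : clsK K s.prod = 1 := (clsK_eq_one_iff K hs0).mpr hprin
      have h2 : clsK K u.prod = 1 := (clsK_eq_one_iff K hu0').mpr huprin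
      rw [hprod, clsK_mul K hv0 hu0', h2, mul_one] at h1
      exact h1
    have hvle : v ≤ s := Multiset.sub_le_self s u
    have hvcard : Multiset.card v ≤ n := by
      have : Multiset.card s = Multiset.card v + Multiset.card u := by
        rw [hsuv, Multiset.card_add]
      have hupos : 0 < Multiset.card u := Multiset.card_pos.mpr hu0
      omega
    obtain ⟨t', ht', htprod⟩ := ih v hvcard hv0
      (fun P hP => hnorm P (Multiset.mem_of_le hvle hP)) hvprin
    refine ⟨u.prod ::ₘ t', ?_, ?_⟩
    · intro J hJ
      rcases Multiset.mem_cons.mp hJ with hJ | hJ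
      · subst hJ
        refine ⟨huprin, ?_⟩
        have h1 : (Ideal.absNorm u.prod : ℝ)
            = (u.map (fun P => ((Ideal.absNorm P : ℕ) : ℝ))).prod := by
          rw [map_multiset_prod, Nat.cast_multiset_prod, Multiset.map_map]
          rfl
        rw [h1]
        calc (u.map (fun P => ((Ideal.absNorm P : ℕ) : ℝ))).prod
            ≤ z ^ Multiset.card (u.map (fun P => ((Ideal.absNorm P : ℕ) : ℝ))) := by
              apply multiset_prod_le_pow _ z hz1
              intro a ha
              obtain ⟨P, hP, rfl⟩ := Multiset.mem_map.mp ha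
              exact ⟨Nat.cast_nonneg _, hnorm P (Multiset.mem_of_le hus hP)⟩
          _ ≤ z ^ classNumber K := by
              rw [Multiset.card_map]
              exact pow_le_pow_right₀ hz1 hucard
          _ = y := hzh
      · exact ht' J hJ
    · rw [Multiset.prod_cons, hprod, htprod, mul_comm]

end Main

/-- For all `x > 0` and `y ≥ 1`, `ψ'_K(x, y^(1/h)) ≤ ψ̃_K(x, y)`, where
`h` is the class number of `K`. -/
theorem smoothness_roots_stmt5 (K : Type) [Field K] [NumberField K]
    (x y : ℝ) (hx : 0 < x) (hy : 1 ≤ y) :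
    psiPrimeK K x (y ^ ((1 : ℝ) / (NumberField.classNumber K : ℝ))) ≤ psiTildeK K x y := by
  classical
  have hfin : {I : Ideal (𝓞 K) | I ≠ ⊥ ∧ I.IsPrincipal ∧ (Ideal.absNorm I : ℝ) ≤ x ∧
      ∃ s : Multiset (Ideal (𝓞 K)),
        (∀ J ∈ s, J.IsPrincipal ∧ (Ideal.absNorm J : ℝ) ≤ y) ∧ I = s.prod}.Finite := by
    apply Set.Finite.subset ((Set.finite_Iic ⌊x⌋₊).biUnion
      (fun n _ => Ideal.finite_setOf_absNorm_eq (S := 𝓞 K) n))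
    intro I hI
    simp only [Set.mem_iUnion, Set.mem_setOf_eq, Set.mem_Iic, exists_prop]
    exact ⟨Ideal.absNorm I, Nat.le_floor hI.2.2.1, rfl⟩
  apply Set.ncard_le_ncard ?_ hfin
  rintro I ⟨hne, hpr, hnx, s, hs, rfl⟩
  refine ⟨hne, hpr, hnx, ?_⟩
  have hne0 : s.prod ≠ 0 := hne
  obtain ⟨t, ht, hteq⟩ := exists_principal_decomp K y hy (Multiset.card s) s le_rfl hne0
    (fun P hP => (hs P hP).2) hpr
  exact ⟨t, ht, hteq⟩
end

section
/- Let M ≥ 1 be a real number such that every ideal class of K contains a nonzero integral ideal of norm at most M. Then for all real x > 0 and all real y ≥ M, one has (1/h) · ψ_K(x/M, y) ≤ ψ'_K(x, y), where h is the class number of K. -/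
set_option synthInstance.maxHeartbeats 1000000
set_option maxHeartbeats 1000000

open NumberField

open scoped nonZeroDivisors

/-- `ψ_K(x, y)`: the number of nonzero ideals of `𝒪_K` of norm at most `x` that are
products of prime ideals of norm at most `y`. -/
noncomputable def psiK (K : Type) [Field K] [NumberField K] (x y : ℝ) : ℕ :=
  Set.ncard {I : Ideal (𝓞 K) | I ≠ ⊥ ∧ (Ideal.absNorm I : ℝ) ≤ x ∧
    ∃ s : Multiset (Ideal (𝓞 K)),
      (∀ P ∈ s, P.IsPrime ∧ (Ideal.absNorm P : ℝ) ≤ y) ∧ I = s.prod}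

/-- If `M ≥ 1` is such that every ideal class of `K` contains a nonzero
integral ideal of norm at most `M`, then for all `x > 0` and `y ≥ M`,
`(1/h) · ψ_K(x/M, y) ≤ ψ'_K(x, y)`, where `h` is the class number of `K`. -/
theorem smoothness_roots_stmt6 (K : Type) [Field K] [NumberField K]
    (M : ℝ) (hM : 1 ≤ M)
    (hMrep : ∀ C : ClassGroup (𝓞 K), ∃ I : nonZeroDivisors (Ideal (𝓞 K)),
      ClassGroup.mk0 I = C ∧ (Ideal.absNorm (I : Ideal (𝓞 K)) : ℝ) ≤ M)
    (x y : ℝ) (hx : 0 < x) (hy : M ≤ y) :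
    (1 / (NumberField.classNumber K : ℝ)) * (psiK K (x / M) y : ℝ)
      ≤ (psiPrimeK K x y : ℝ) := by
  classical
  set R := 𝓞 K
  have hM0 : (0:ℝ) < M := lt_of_lt_of_le one_pos hM
  set S : Set (Ideal R) := {I : Ideal R | I ≠ ⊥ ∧ (Ideal.absNorm I : ℝ) ≤ x / M ∧
    ∃ s : Multiset (Ideal R),
      (∀ P ∈ s, P.IsPrime ∧ (Ideal.absNorm P : ℝ) ≤ y) ∧ I = s.prod} with hS
  set T : Set (Ideal R) := {I : Ideal R | I ≠ ⊥ ∧ I.IsPrincipal ∧ (Ideal.absNorm I : ℝ) ≤ x ∧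
    ∃ s : Multiset (Ideal R),
      (∀ P ∈ s, P.IsPrime ∧ (Ideal.absNorm P : ℝ) ≤ y) ∧ I = s.prod} with hT
  have hTfin : T.Finite := by
    refine (Ideal.finite_setOf_absNorm_le ⌊x⌋₊).subset ?_
    intro I hI
    exact Nat.le_floor hI.2.2.1
  have hTf : Finite ↥T := hTfin.to_subtype
  -- representative choice
  have rep : ∀ C : ClassGroup R, {J : (Ideal R)⁰ //
      ClassGroup.mk0 J = C ∧ (Ideal.absNorm (J : Ideal R) : ℝ) ≤ M} := fun C =>
    ⟨(hMrep C).choose, (hMrep C).choose_spec⟩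
  have hmem : ∀ I ∈ S, I ∈ (Ideal R)⁰ := fun I hI =>
    mem_nonZeroDivisors_iff_ne_zero.mpr (by
      simpa [Submodule.zero_eq_bot] using hI.1)
  -- membership of the product in T
  have hmemT : ∀ (I : Ideal R) (hI0 : I ∈ (Ideal R)⁰), I ∈ S →
      I * (((rep (ClassGroup.mk0 ⟨I, hI0⟩)⁻¹).1 : (Ideal R)⁰) : Ideal R) ∈ T := by
    intro I hI0 hIS
    obtain ⟨hne, hnorm, s, hs, hprod⟩ := hIS
    set C := ClassGroup.mk0 (⟨I, hI0⟩ : (Ideal R)⁰) with hC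
    set J : Ideal R := (((rep C⁻¹).1 : (Ideal R)⁰) : Ideal R) with hJ
    have hJ0 : J ∈ (Ideal R)⁰ := SetLike.coe_mem _
    have hJne : J ≠ ⊥ := by
      have := mem_nonZeroDivisors_iff_ne_zero.mp hJ0
      simpa [Submodule.zero_eq_bot] using this
    have hJnorm : (Ideal.absNorm J : ℝ) ≤ M := (rep C⁻¹).2.2
    have hJnorm0 : 0 < Ideal.absNorm J := Nat.pos_of_ne_zero (by
      simpa [Ideal.absNorm_eq_zero_iff] using hJne)
    refine ⟨?_, ?_, ?_, ?_⟩
    · rw [← Submodule.zero_eq_bot]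
      exact mul_ne_zero (by rwa [Submodule.zero_eq_bot]) (by rwa [Submodule.zero_eq_bot])
    · have hIJ0 : I * J ∈ (Ideal R)⁰ := mul_mem hI0 hJ0
      rw [← ClassGroup.mk0_eq_one_iff hIJ0]
      have : (⟨I * J, hIJ0⟩ : (Ideal R)⁰) = ⟨I, hI0⟩ * (rep C⁻¹).1 := rfl
      rw [this, map_mul, ← hC, (rep C⁻¹).2.1, mul_inv_cancel]
    · rw [map_mul, Nat.cast_mul]
      calc (Ideal.absNorm I : ℝ) * (Ideal.absNorm J : ℝ)
          ≤ (x / M) * M := by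
            apply mul_le_mul hnorm hJnorm (by positivity) (by positivity)
        _ = x := div_mul_cancel₀ x (ne_of_gt hM0)
    · refine ⟨s + UniqueFactorizationMonoid.normalizedFactors J, ?_, ?_⟩
      · intro P hP
        rcases Multiset.mem_add.mp hP with h | h
        · exact hs P h
        · have hprime := UniqueFactorizationMonoid.prime_of_normalized_factor P h
          refine ⟨Ideal.isPrime_of_prime hprime, ?_⟩
          have hdvd : P ∣ J := UniqueFactorizationMonoid.dvd_of_mem_normalizedFactors h
          have : Ideal.absNorm P ∣ Ideal.absNorm J := map_dvd Ideal.absNorm hdvd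
          have hle : (Ideal.absNorm P : ℝ) ≤ (Ideal.absNorm J : ℝ) := by
            exact_mod_cast Nat.le_of_dvd hJnorm0 this
          linarith
      · rw [Multiset.prod_add, ← hprod, prod_normalizedFactors_eq_self hJne]
  -- key counting
  have key : psiK K (x / M) y ≤ classNumber K * psiPrimeK K x y := by
    set F : ↥S → ClassGroup R × ↥T := fun I =>
      (ClassGroup.mk0 ⟨(I : Ideal R), hmem I I.2⟩,
        ⟨(I : Ideal R) *
          (((rep (ClassGroup.mk0 ⟨(I : Ideal R), hmem I I.2⟩)⁻¹).1 : (Ideal R)⁰) : Ideal R),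
          hmemT I (hmem I I.2) I.2⟩) with hF
    have hinj : Function.Injective F := by
      intro I I' h
      have h1 : ClassGroup.mk0 ⟨(I : Ideal R), hmem I I.2⟩
          = ClassGroup.mk0 ⟨(I' : Ideal R), hmem I' I'.2⟩ := congrArg Prod.fst h
      have h2 := congrArg (fun p => ((Prod.snd p : ↥T) : Ideal R)) h
      simp only [hF] at h2
      rw [h1] at h2
      have hJne : (((rep (ClassGroup.mk0 ⟨(I' : Ideal R), hmem I' I'.2⟩)⁻¹).1 : (Ideal R)⁰) : Ideal R) ≠ 0 :=
        mem_nonZeroDivisors_iff_ne_zero.mp (SetLike.coe_mem _)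
      exact Subtype.ext (mul_right_cancel₀ hJne h2)
    calc psiK K (x / M) y = Nat.card ↥S := (Nat.card_coe_set_eq S).symm
      _ ≤ Nat.card (ClassGroup R × ↥T) := Nat.card_le_card_of_injective F hinj
      _ = classNumber K * psiPrimeK K x y := by
          rw [Nat.card_prod, Nat.card_coe_set_eq]
          congr 1
          rw [classNumber, Nat.card_eq_fintype_card]
  have hh : (0:ℝ) < (classNumber K : ℝ) := by
    have : 0 < classNumber K := Fintype.card_pos
    exact_mod_cast this
  rw [one_div, inv_mul_le_iff₀ hh]
  calc (psiK K (x / M) y : ℝ) ≤ ((classNumber K * psiPrimeK K x y : ℕ) : ℝ) := by exact_mod_cast key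
    _ = (classNumber K : ℝ) * (psiPrimeK K x y : ℝ) := by push_cast; ring
end

section
/- Let ω = (ω₁, …, ω_d) be an integral basis of 𝒪_K, where d is the degree of K. There is a positive constant c₃ depending only on K and ω such that for every nonzero η ∈ 𝒪_K there exists η̃ ∈ 𝒪_K generating the same principal ideal as η (i.e., η̃ = uη for some unit u of 𝒪_K) whose coordinates a₁, …, a_d in the basis ω satisfy |a_i| ≤ c₃ · N((η))^(1/d) for all 1 ≤ i ≤ d. -/
set_option synthInstance.maxHeartbeats 1000000
set_option maxHeartbeats 1000000

open NumberField

section Aux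

open NumberField.mixedEmbedding NumberField.Units NumberField.Units.dirichletUnitTheorem

private lemma ratabs_aux (q : ℚ) : ‖(q : ℂ)‖ = |(q : ℝ)| := Complex.norm_ratCast _

/-- Coordinates in any integral basis are bounded by a constant multiple of the house. -/
lemma coords_le_house_aux (K : Type) [Field K] [NumberField K]
    {ι : Type} [Fintype ι] (ω : Module.Basis ι ℤ (𝓞 K)) :
    ∃ C : ℝ, 0 ≤ C ∧ ∀ α : 𝓞 K, ∀ i : ι,
      |(ω.repr α i : ℝ)| ≤ C * house (algebraMap (𝓞 K) K α) := by
  classical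
  obtain ⟨c, hc⟩ : ∃ c : ℝ, ∀ (α : 𝓞 K) (i : K →+* ℂ),
      ‖((((integralBasis K).reindex (equivReindex K).symm).repr (α : K)) i : ℂ)‖ ≤
        c * house (algebraMap (𝓞 K) K α) :=
    ⟨_, fun α i => NumberField.house.basis_repr_norm_le_const_mul_house K α i⟩
  set b' : Module.Basis (K →+* ℂ) ℚ K := (integralBasis K).reindex (equivReindex K).symm with hb'
  set ωQ : Module.Basis ι ℚ K := Module.Basis.localizationLocalization ℚ (nonZeroDivisors ℤ) K ω with hωQ
  have hreprQ : ∀ (α : 𝓞 K) (i : ι),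
      ωQ.repr (algebraMap (𝓞 K) K α) i = ((ω.repr α i : ℤ) : ℚ) := fun α i =>
    Module.Basis.localizationLocalization_repr_algebraMap ℚ (nonZeroDivisors ℤ) K ω α i
  have key : ∀ (β : K) (i : ι), ωQ.repr β i = ∑ φ : K →+* ℂ, b'.repr β φ * ωQ.repr (b' φ) i := by
    intro β i
    conv_lhs => rw [← b'.sum_repr β]
    simp only [map_sum, map_smul, Finsupp.finset_sum_apply, Finsupp.smul_apply, smul_eq_mul]
  set C0 : ℝ := ∑ φ : K →+* ℂ, ∑ j : ι, |(ωQ.repr (b' φ) j : ℝ)| with hC0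
  have hC0nn : 0 ≤ C0 := Finset.sum_nonneg fun _ _ => Finset.sum_nonneg fun _ _ => abs_nonneg _
  refine ⟨|c| * C0, mul_nonneg (abs_nonneg _) hC0nn, fun α i => ?_⟩
  have hhn : 0 ≤ house (algebraMap (𝓞 K) K α) := house_nonneg _
  have h1 : |(ω.repr α i : ℝ)| = |(ωQ.repr (algebraMap (𝓞 K) K α) i : ℝ)| := by
    rw [hreprQ]; push_cast; ring_nf
  rw [h1]
  have h2 : (ωQ.repr (algebraMap (𝓞 K) K α) i : ℝ)
      = ∑ φ : K →+* ℂ, (b'.repr (algebraMap (𝓞 K) K α) φ : ℝ) * (ωQ.repr (b' φ) i : ℝ) := by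
    rw [key]; push_cast; ring
  rw [h2]
  calc |∑ φ : K →+* ℂ, (b'.repr (algebraMap (𝓞 K) K α) φ : ℝ) * (ωQ.repr (b' φ) i : ℝ)|
      ≤ ∑ φ : K →+* ℂ, |(b'.repr (algebraMap (𝓞 K) K α) φ : ℝ)| * |(ωQ.repr (b' φ) i : ℝ)| := by
        refine (Finset.abs_sum_le_sum_abs _ _).trans ?_
        simp [abs_mul, le_refl]
    _ ≤ ∑ φ : K →+* ℂ, (|c| * house (algebraMap (𝓞 K) K α)) * |(ωQ.repr (b' φ) i : ℝ)| := by
        refine Finset.sum_le_sum fun φ _ => mul_le_mul_of_nonneg_right ?_ (abs_nonneg _)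
        have := hc α φ
        rw [ratabs_aux] at this
        exact this.trans (mul_le_mul_of_nonneg_right (le_abs_self c) hhn)
    _ = (|c| * house (algebraMap (𝓞 K) K α)) * ∑ φ : K →+* ℂ, |(ωQ.repr (b' φ) i : ℝ)| := by
        rw [Finset.mul_sum]
    _ ≤ (|c| * house (algebraMap (𝓞 K) K α)) * C0 := by
        refine mul_le_mul_of_nonneg_left ?_ (mul_nonneg (abs_nonneg _) hhn)
        exact Finset.sum_le_sum fun φ _ =>
          Finset.single_le_sum (fun j _ => abs_nonneg ((ωQ.repr (b' φ) j : ℝ)))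
            (Finset.mem_univ i)
    _ = |c| * C0 * house (algebraMap (𝓞 K) K α) := by ring

/-- In the fundamental cone, all `normAtPlace` are bounded by a constant multiple
of the `d`-th root of the norm. -/
lemma normAtPlace_le_of_mem_fundamentalCone_aux (K : Type) [Field K] [NumberField K] :
    ∃ c : ℝ, 0 < c ∧ ∀ y : mixedSpace K, y ∈ fundamentalCone K →
      ∀ w : InfinitePlace K, normAtPlace w y ≤
        c * (mixedEmbedding.norm y) ^ ((1:ℝ)/(Module.finrank ℚ K : ℝ)) := by
  classical
  obtain ⟨R, hR⟩ := isBounded_iff_forall_norm_le.mp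
    (ZSpan.fundamentalDomain_isBounded ((basisUnitLattice K).ofZLatticeBasis ℝ _))
  set R' : ℝ := max R 0 with hR'def
  have hR'nn : 0 ≤ R' := le_max_right _ _
  set Rtot : ℝ := (Fintype.card (InfinitePlace K) : ℝ) * R' with hRtotdef
  have hRtotnn : 0 ≤ Rtot := mul_nonneg (Nat.cast_nonneg _) hR'nn
  refine ⟨Real.exp Rtot, Real.exp_pos _, fun y hy w => ?_⟩
  have hN : 0 < mixedEmbedding.norm y := fundamentalCone.norm_pos_of_mem hy
  set N := mixedEmbedding.norm y with hNdef
  have hnp : ∀ w : InfinitePlace K, 0 < normAtPlace w y :=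
    fun w => fundamentalCone.normAtPlace_pos_of_mem hy w
  have hlog : ‖logMap y‖ ≤ R' := le_trans (hR _ hy.1) (le_max_left _ _)
  have hw1 : ∀ w : {w : InfinitePlace K // w ≠ w₀}, |logMap y w| ≤ R' := by
    intro w
    have := norm_le_pi_norm (logMap y) w
    rw [Real.norm_eq_abs] at this
    exact this.trans hlog
  set L : InfinitePlace K → ℝ := fun w =>
    (w.mult : ℝ) * (Real.log (normAtPlace w y) - Real.log N * (Module.finrank ℚ K : ℝ)⁻¹) with hLdef
  have hdpos : (0:ℝ) < (Module.finrank ℚ K : ℝ) := by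
    exact_mod_cast Module.finrank_pos
  have hlogN : Real.log N = ∑ w : InfinitePlace K, (w.mult : ℝ) * Real.log (normAtPlace w y) := by
    rw [hNdef, mixedEmbedding.norm_apply,
      Real.log_prod (fun w _ => pow_ne_zero _ (hnp w).ne')]
    exact Finset.sum_congr rfl fun w _ => by rw [Real.log_pow]
  have hLsum : ∑ w : InfinitePlace K, L w = 0 := by
    have hm : (∑ w : InfinitePlace K, (w.mult : ℝ)) = (Module.finrank ℚ K : ℝ) := by
      rw_mod_cast [InfinitePlace.sum_mult_eq]
    simp only [hLdef, mul_sub]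
    rw [Finset.sum_sub_distrib, ← hlogN, ← Finset.sum_mul, hm]
    field_simp
    ring
  have hw0 : |L w₀| ≤ Rtot := by
    have hL0 : L w₀ = - ∑ w ∈ Finset.univ.erase w₀, L w := by
      have h := hLsum
      rw [← Finset.add_sum_erase _ L (Finset.mem_univ w₀)] at h
      linarith
    rw [hL0, abs_neg]
    refine (Finset.abs_sum_le_sum_abs _ _).trans ?_
    have : ∀ w ∈ Finset.univ.erase w₀, |L w| ≤ R' := by
      intro w hw
      exact hw1 ⟨w, Finset.ne_of_mem_erase hw⟩
    refine (Finset.sum_le_sum this).trans ?_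
    rw [Finset.sum_const, nsmul_eq_mul]
    refine mul_le_mul_of_nonneg_right ?_ hR'nn
    exact_mod_cast le_trans (Finset.card_erase_le) (by simp [Finset.card_univ])
  have hLle : ∀ w : InfinitePlace K, L w ≤ Rtot := by
    intro w
    by_cases h : w = w₀
    · subst h; exact (le_abs_self _).trans hw0
    · refine ((le_abs_self _).trans (hw1 ⟨w, h⟩)).trans ?_
      have h1 : (1:ℝ) ≤ (Fintype.card (InfinitePlace K) : ℝ) := by
        exact_mod_cast Fintype.card_pos
      exact le_mul_of_one_le_left hR'nn h1
  have hmult : (1:ℝ) ≤ (w.mult : ℝ) := InfinitePlace.one_le_mult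
  have ht : Real.log (normAtPlace w y) - Real.log N * (Module.finrank ℚ K : ℝ)⁻¹ ≤ Rtot := by
    have := hLle w
    rw [hLdef] at this
    set t := Real.log (normAtPlace w y) - Real.log N * (Module.finrank ℚ K : ℝ)⁻¹
    by_cases h : 0 ≤ t
    · calc t = 1 * t := (one_mul t).symm
        _ ≤ (w.mult : ℝ) * t := mul_le_mul_of_nonneg_right hmult h
        _ ≤ Rtot := this
    · linarith
  calc normAtPlace w y = Real.exp (Real.log (normAtPlace w y)) := (Real.exp_log (hnp w)).symm
    _ ≤ Real.exp (Rtot + Real.log N * (Module.finrank ℚ K : ℝ)⁻¹) := by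
        rw [Real.exp_le_exp]; linarith
    _ = Real.exp Rtot * N ^ ((1:ℝ)/(Module.finrank ℚ K : ℝ)) := by
        rw [Real.exp_add, Real.rpow_def_of_pos hN, one_div]

/-- Every nonzero algebraic integer has an associate whose house is bounded by a constant
multiple of the `d`-th root of the norm of the ideal it generates. -/
lemma exists_assoc_house_le_aux (K : Type) [Field K] [NumberField K] :
    ∃ c : ℝ, 0 < c ∧ ∀ η : 𝓞 K, η ≠ 0 → ∃ u : (𝓞 K)ˣ,
      house (algebraMap (𝓞 K) K ((u : 𝓞 K) * η)) ≤
        c * (Ideal.absNorm (Ideal.span {η}) : ℝ) ^ ((1:ℝ)/(Module.finrank ℚ K : ℝ)) := by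
  obtain ⟨c, hc, hmain⟩ := normAtPlace_le_of_mem_fundamentalCone_aux K
  refine ⟨c, hc, fun η hη => ?_⟩
  have hη0 : algebraMap (𝓞 K) K η ≠ 0 := by
    simpa using hη
  have hx : mixedEmbedding.norm (mixedEmbedding K (algebraMap (𝓞 K) K η)) ≠ 0 := by
    rw [mixedEmbedding.norm_eq_norm]
    simpa using (Algebra.norm_ne_zero_iff (R := ℚ)).mpr hη0
  obtain ⟨u, hu⟩ := fundamentalCone.exists_unit_smul_mem hx
  refine ⟨u, ?_⟩
  set η' : 𝓞 K := (u : 𝓞 K) * η with hη'def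
  have hy : mixedEmbedding K (algebraMap (𝓞 K) K η')
      = u • mixedEmbedding K (algebraMap (𝓞 K) K η) := by
    rw [unitSMul_smul, ← map_mul, ← map_mul]
  rw [← hy] at hu
  have hspan : Ideal.span {η} = Ideal.span {η'} :=
    Ideal.span_singleton_eq_span_singleton.mpr ⟨u, mul_comm (η) (u:𝓞 K) ▸ rfl⟩
  have hNval : mixedEmbedding.norm (mixedEmbedding K (algebraMap (𝓞 K) K η'))
      = (Ideal.absNorm (Ideal.span {η}) : ℝ) := by
    rw [mixedEmbedding.norm_eq_norm, hspan, Ideal.absNorm_span_singleton,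
      ← Algebra.coe_norm_int]
    push_cast [Nat.cast_natAbs]
    norm_cast
  have hrhs : 0 ≤ c * (Ideal.absNorm (Ideal.span {η}) : ℝ) ^ ((1:ℝ)/(Module.finrank ℚ K : ℝ)) :=
    mul_nonneg hc.le (Real.rpow_nonneg (Nat.cast_nonneg _) _)
  show ‖canonicalEmbedding K (algebraMap (𝓞 K) K η')‖ ≤ _
  rw [pi_norm_le_iff_of_nonneg hrhs]
  intro φ
  rw [canonicalEmbedding.apply_at]
  have h1 : ‖φ (algebraMap (𝓞 K) K η')‖
      = normAtPlace (InfinitePlace.mk φ) (mixedEmbedding K (algebraMap (𝓞 K) K η')) := by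
    rw [normAtPlace_apply, InfinitePlace.apply]
  rw [h1, ← hNval]
  exact hmain _ hu _

end Aux

/-- Fincke, Pohst. Let `ω = (ω₁, …, ω_d)` be an integral basis of
`𝒪_K`, `d` the degree of `K`.  There is a constant `c₃ = c₃(K, ω) > 0` such that every
nonzero `η ∈ 𝒪_K` has an associate `η̃` whose coordinates `aᵢ` in the basis `ω` satisfy
`|aᵢ| ≤ c₃ · N((η))^(1/d)`. -/
theorem smoothness_roots_stmt7 (K : Type) [Field K] [NumberField K]
    (d : ℕ) (hd : d = Module.finrank ℚ K)
    (ω : Module.Basis (Fin d) ℤ (𝓞 K)) :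
    ∃ c₃ : ℝ, 0 < c₃ ∧ ∀ η : 𝓞 K, η ≠ 0 →
      ∃ η' : 𝓞 K, (∃ u : (𝓞 K)ˣ, η' = u * η) ∧
        ∀ i : Fin d, |(ω.repr η' i : ℝ)| ≤
          c₃ * (Ideal.absNorm (Ideal.span {η}) : ℝ) ^ ((1 : ℝ) / (d : ℝ)) := by
  obtain ⟨C, hCnn, hC⟩ := coords_le_house_aux K ω
  obtain ⟨c, hc, hmain⟩ := exists_assoc_house_le_aux K
  refine ⟨C * c + 1, by positivity, fun η hη => ?_⟩
  obtain ⟨u, hu⟩ := hmain η hη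
  refine ⟨(u : 𝓞 K) * η, ⟨u, rfl⟩, fun i => ?_⟩
  have hNnn : (0:ℝ) ≤ (Ideal.absNorm (Ideal.span {η}) : ℝ) ^ ((1:ℝ)/(d : ℝ)) :=
    Real.rpow_nonneg (Nat.cast_nonneg _) _
  have hdeq : ((d : ℝ)) = (Module.finrank ℚ K : ℝ) := by exact_mod_cast hd
  calc |(ω.repr ((u : 𝓞 K) * η) i : ℝ)|
      ≤ C * house (algebraMap (𝓞 K) K ((u : 𝓞 K) * η)) := hC _ i
    _ ≤ C * (c * (Ideal.absNorm (Ideal.span {η}) : ℝ) ^ ((1:ℝ)/(d : ℝ))) := by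
        rw [hdeq]
        exact mul_le_mul_of_nonneg_left hu hCnn
    _ ≤ (C * c + 1) * (Ideal.absNorm (Ideal.span {η}) : ℝ) ^ ((1:ℝ)/(d : ℝ)) := by
        nlinarith [hNnn]
end

section
/- Let p be a prime and let g ∈ 𝔽_p[Y] be a product of k distinct monic irreducible polynomials, each of degree e. Then the group G = {a ∈ (𝔽_p[Y]/(g))^* : a^(p−1) = 1} has exactly (p−1)^k elements. -/
set_option synthInstance.maxHeartbeats 1000000
set_option maxHeartbeats 1000000

open Polynomial

section Aux

/-- Card of `n`-th roots of unity set is invariant under group isomorphism. -/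
lemma natCard_pow_eq_one_congr {G H : Type*} [Monoid G] [Monoid H] (e : G ≃* H) (n : ℕ) :
    Nat.card {a : G | a ^ n = 1} = Nat.card {a : H | a ^ n = 1} := by
  refine Nat.card_congr (Equiv.subtypeEquiv e.toEquiv fun a => ?_)
  show a ^ n = 1 ↔ e a ^ n = 1
  rw [← map_pow]
  exact ⟨fun h => by rw [h, map_one], fun h => e.injective (by rw [h, map_one])⟩

lemma natCard_pow_eq_one_pi {ι : Type*} [Fintype ι] (G : ι → Type*) [∀ i, Monoid (G i)] (n : ℕ) :
    Nat.card {a : ∀ i, G i | a ^ n = 1} = ∏ i, Nat.card {x : G i | x ^ n = 1} := by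
  rw [← Nat.card_pi]
  refine Nat.card_congr ((Equiv.subtypeEquivRight ?_).trans
    (Equiv.subtypePiEquivPi (p := fun i (x : G i) => x ^ n = 1)))
  intro a
  simp [Set.mem_setOf_eq, funext_iff]

lemma natCard_pow_eq_one_of_cyclic {G : Type*} [CommGroup G] [Finite G] [IsCyclic G] {n : ℕ}
    (hn : 0 < n) (hdvd : n ∣ Nat.card G) : Nat.card {a : G | a ^ n = 1} = n := by
  classical
  have : Fintype G := Fintype.ofFinite G
  have hNpos : 0 < Nat.card G := Nat.card_pos
  obtain ⟨g, hg⟩ := IsCyclic.exists_ofOrder_eq_natCard (α := G)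
  set h := g ^ (Nat.card G / n) with hh
  have horder : orderOf h = n := by
    rw [hh, orderOf_pow, hg, Nat.gcd_eq_right (Nat.div_dvd_of_dvd hdvd),
      Nat.div_div_self hdvd hNpos.ne']
  have hsub : (Subgroup.zpowers h : Set G) ⊆ {a : G | a ^ n = 1} := by
    rintro x hx
    obtain ⟨k, rfl⟩ := Subgroup.mem_zpowers_iff.mp hx
    have : h ^ n = 1 := by rw [← horder, pow_orderOf_eq_one]
    show (h ^ k) ^ n = 1
    rw [← zpow_natCast, ← zpow_mul, mul_comm k (n : ℤ), zpow_mul, zpow_natCast, this, one_zpow]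
  refine le_antisymm ?_ ?_
  · have hle := IsCyclic.card_pow_eq_one_le (α := G) hn
    have heq : Nat.card {a : G | a ^ n = 1}
        = (Finset.univ.filter fun a : G => a ^ n = 1).card := by
      rw [Nat.card_coe_set_eq, Set.ncard_eq_toFinset_card', Set.toFinset_setOf]
    omega
  · calc n = Nat.card (Subgroup.zpowers h) := by rw [Nat.card_zpowers, horder]
    _ ≤ Nat.card {a : G | a ^ n = 1} :=
        Nat.card_le_card_of_injective _ (Set.inclusion_injective hsub)

/-- Units of a product of monoids. -/
def piUnitsAux {ι : Type*} (M : ι → Type*) [∀ i, Monoid (M i)] :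
    (∀ i, M i)ˣ ≃* ∀ i, (M i)ˣ where
  toFun u i := ⟨u.val i, u.inv i, congrFun u.val_inv i, congrFun u.inv_val i⟩
  invFun u := ⟨fun i => (u i).val, fun i => (u i).inv,
    funext fun i => (u i).val_inv, funext fun i => (u i).inv_val⟩
  left_inv u := Units.ext rfl
  right_inv u := rfl
  map_mul' u v := rfl

lemma coprime_of_distinct_irreducible {K : Type*} [Field K] {a b : K[X]}
    (ha : a.Monic) (hia : Irreducible a) (hb : b.Monic) (hib : Irreducible b) (hab : a ≠ b) :
    IsCoprime a b := by
  refine isCoprime_of_irreducible_dvd (fun h => hia.ne_zero (h.1)) ?_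
  intro z hz hza hzb
  have h1 : Associated z a := hz.associated_of_dvd hia hza
  have h2 : Associated z b := hz.associated_of_dvd hib hzb
  exact hab (Polynomial.eq_of_monic_of_associated ha hb (h1.symm.trans h2))

/-- The count of `(p-1)`-st roots of unity in the units of `𝔽_p[Y]/(q)` for `q` irreducible. -/
lemma adjoinRoot_count (p : ℕ) (hp : p.Prime) (q : Polynomial (ZMod p)) (hq : Irreducible q) :
    Nat.card {x : (Polynomial (ZMod p) ⧸ Ideal.span {q})ˣ | x ^ (p - 1) = 1} = p - 1 := by
  have : Fact (Nat.Prime p) := ⟨hp⟩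
  have : Fact (Irreducible q) := ⟨hq⟩
  show Nat.card {x : (AdjoinRoot q)ˣ | x ^ (p - 1) = 1} = p - 1
  have pb : PowerBasis (ZMod p) (AdjoinRoot q) := AdjoinRoot.powerBasis hq.ne_zero
  have : Fintype (AdjoinRoot q) := Module.fintypeOfFintype pb.basis
  have hcard : Fintype.card (AdjoinRoot q) = p ^ pb.dim := by
    rw [Module.card_fintype pb.basis, ZMod.card, Fintype.card_fin]
  have hunits : Nat.card (AdjoinRoot q)ˣ = p ^ pb.dim - 1 := by
    rw [Nat.card_eq_fintype_card, Fintype.card_units, hcard]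
  refine natCard_pow_eq_one_of_cyclic (Nat.sub_pos_of_lt hp.one_lt) ?_
  rw [hunits]
  simpa using Nat.sub_dvd_pow_sub_pow p 1 pb.dim

end Aux

/-- Let `p` be a prime and `g ∈ 𝔽_p[Y]` a product of `k` distinct monic
irreducible polynomials, each of degree `e`.  Then the group
`G = {a ∈ (𝔽_p[Y]/(g))^* : a^(p−1) = 1}` has exactly `(p−1)^k` elements. -/
theorem smoothness_roots_stmt10
    (p : ℕ) (hp : p.Prime) (k e : ℕ)
    (s : Finset (Polynomial (ZMod p))) (hcard : s.card = k)
    (hs : ∀ q ∈ s, q.Monic ∧ Irreducible q ∧ q.natDegree = e)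
    (g : Polynomial (ZMod p)) (hg : g = ∏ q ∈ s, q) :
    Nat.card {a : (Polynomial (ZMod p) ⧸ Ideal.span {g})ˣ | a ^ (p - 1) = 1}
      = (p - 1) ^ k := by
  classical
  have : Fact (Nat.Prime p) := ⟨hp⟩
  subst hg
  subst hcard
  have hcop : ∀ (i j : {x // x ∈ s}), i ≠ j →
      IsCoprime (i : Polynomial (ZMod p)) (j : Polynomial (ZMod p)) := by
    intro i j hij
    obtain ⟨hm1, hi1, -⟩ := hs i i.2
    obtain ⟨hm2, hi2, -⟩ := hs j j.2
    exact coprime_of_distinct_irreducible hm1 hi1 hm2 hi2 fun h => hij (Subtype.ext h)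
  have hinf : ⨅ i : {x // x ∈ s}, Ideal.span {(i : Polynomial (ZMod p))}
      = Ideal.span {∏ q ∈ s, q} := by
    rw [Ideal.iInf_span_singleton hcop]
    exact congrArg (fun t => Ideal.span {t}) (Finset.prod_coe_sort s id)
  have hpair : Pairwise (Function.onFun IsCoprime
      fun i : {x // x ∈ s} => Ideal.span {(i : Polynomial (ZMod p))}) := by
    intro i j hij
    exact (Ideal.isCoprime_span_singleton_iff _ _).mpr (hcop i j hij)
  let e0 : (Polynomial (ZMod p) ⧸ Ideal.span {∏ q ∈ s, q}) ≃+*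
      ∀ i : {x // x ∈ s}, Polynomial (ZMod p) ⧸ Ideal.span {(i : Polynomial (ZMod p))} :=
    (Ideal.quotEquivOfEq hinf.symm).trans (Ideal.quotientInfRingEquivPiQuotient _ hpair)
  rw [natCard_pow_eq_one_congr ((Units.mapEquiv e0.toMulEquiv).trans (piUnitsAux _)),
    natCard_pow_eq_one_pi]
  have hone : ∀ i : {x // x ∈ s},
      Nat.card {x : (Polynomial (ZMod p) ⧸ Ideal.span {(i : Polynomial (ZMod p))})ˣ |
        x ^ (p - 1) = 1} = p - 1 := by
    intro i
    exact adjoinRoot_count p hp _ (hs i i.2).2.1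
  rw [Finset.prod_congr rfl fun i _ => hone i]
  simp [Finset.card_univ]
end

section
/- Let p be a prime and let g ∈ 𝔽_p[Y] be a product of k distinct monic irreducible polynomials, each of degree e. Consider the group homomorphism σ : (𝔽_p[Y]/(g))^* → (𝔽_p[Y]/(g))^* given by σ(a) = a^((p^e−1)/(p−1)). Then the kernel of σ has exactly ((p^e−1)/(p−1))^k elements, and the image of σ equals the subgroup G = {a ∈ (𝔽_p[Y]/(g))^* : a^(p−1) = 1}. -/
set_option synthInstance.maxHeartbeats 1000000
set_option maxHeartbeats 1000000

open Polynomial Finset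

private def piUnitsEquiv {ι : Type*} {M : ι → Type*} [∀ i, Monoid (M i)] :
    (∀ i, M i)ˣ ≃* ∀ i, (M i)ˣ where
  toFun u i := ⟨u.val i, u.inv i, congrFun u.val_inv i, congrFun u.inv_val i⟩
  invFun f := ⟨fun i => (f i : M i), fun i => ((f i)⁻¹ : (M i)ˣ),
    funext fun i => (f i).val_inv, funext fun i => (f i).inv_val⟩
  left_inv u := Units.ext rfl
  right_inv f := funext fun i => Units.ext rfl
  map_mul' u v := funext fun i => Units.ext rfl

private lemma card_ker_pow_le {G : Type*} [CommGroup G] [Finite G] [IsCyclic G] {d : ℕ}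
    (hd0 : 0 < d) : Nat.card (powMonoidHom d : G →* G).ker ≤ d := by
  classical
  cases nonempty_fintype G
  calc Nat.card (powMonoidHom d : G →* G).ker
      = Nat.card {x : G // x ^ d = 1} :=
        Nat.card_congr (Equiv.subtypeEquivRight fun x => by
          simp [MonoidHom.mem_ker])
    _ = #{a : G | a ^ d = 1} := by
        rw [Nat.card_eq_fintype_card, Fintype.card_subtype]
    _ ≤ d := IsCyclic.card_pow_eq_one_le hd0

private lemma card_ker_pow {G : Type*} [CommGroup G] [Finite G] [IsCyclic G] {d : ℕ}
    (hd0 : 0 < d) (hd : d ∣ Nat.card G) : Nat.card (powMonoidHom d : G →* G).ker = d := by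
  obtain ⟨c, hc⟩ := hd
  have hcard : 0 < Nat.card G := Nat.card_pos
  have hc0 : 0 < c := by
    rcases Nat.eq_zero_or_pos c with h | h
    · rw [h, mul_zero] at hc; omega
    · exact h
  have hub := card_ker_pow_le (G := G) hd0
  have hle : (powMonoidHom c : G →* G).range ≤ (powMonoidHom d : G →* G).ker := by
    rintro x ⟨y, rfl⟩
    simp only [MonoidHom.mem_ker, powMonoidHom_apply]
    rw [← pow_mul, mul_comm, ← hc]
    exact pow_card_eq_one'
  have hprod : Nat.card (powMonoidHom c : G →* G).ker
      * Nat.card (powMonoidHom c : G →* G).range = Nat.card G := by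
    rw [← Nat.card_congr (QuotientGroup.quotientKerEquivRange (powMonoidHom c : G →* G)).toEquiv,
      mul_comm, ← Subgroup.card_eq_card_quotient_mul_card_subgroup]
  have h1 : Nat.card (powMonoidHom c : G →* G).ker ≤ c := card_ker_pow_le hc0
  have h2 : d ≤ Nat.card (powMonoidHom c : G →* G).range := by
    by_contra h
    push_neg at h
    have hlt : Nat.card (powMonoidHom c : G →* G).ker
        * Nat.card (powMonoidHom c : G →* G).range < c * d :=
      lt_of_le_of_lt (Nat.mul_le_mul_right _ h1) ((Nat.mul_lt_mul_left hc0).mpr h)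
    rw [hprod, hc, Nat.mul_comm d c] at hlt
    exact lt_irrefl _ hlt
  have h3 := Subgroup.card_le_of_le hle
  omega

/-- Let `p` be a prime and `g ∈ 𝔽_p[Y]` a product of `k` distinct monic
irreducible polynomials, each of degree `e`.  For the homomorphism
`σ : a ↦ a^((p^e−1)/(p−1))` of `(𝔽_p[Y]/(g))^*`, the kernel of `σ` has exactly
`((p^e−1)/(p−1))^k` elements and the range of `σ` is `G = {a : a^(p−1) = 1}`. -/
theorem smoothness_roots_stmt11
    (p : ℕ) (hp : p.Prime) (k e : ℕ)
    (s : Finset (Polynomial (ZMod p))) (hcard : s.card = k)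
    (hs : ∀ q ∈ s, q.Monic ∧ Irreducible q ∧ q.natDegree = e)
    (g : Polynomial (ZMod p)) (hg : g = ∏ q ∈ s, q) :
    Nat.card
        (@powMonoidHom (Polynomial (ZMod p) ⧸ Ideal.span {g})ˣ _
          ((p ^ e - 1) / (p - 1))).ker
      = ((p ^ e - 1) / (p - 1)) ^ k ∧
    (@powMonoidHom (Polynomial (ZMod p) ⧸ Ideal.span {g})ˣ _
        ((p ^ e - 1) / (p - 1))).range
      = (@powMonoidHom (Polynomial (ZMod p) ⧸ Ideal.span {g})ˣ _ (p - 1)).ker := by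
  classical
  have hp2 := hp.two_le
  haveI : Fact p.Prime := ⟨hp⟩
  rcases s.eq_empty_or_nonempty with hse | hsne
  · -- trivial case : s = ∅, so g = 1 and the quotient ring is trivial
    subst hse
    rw [Finset.prod_empty] at hg
    have hk : k = 0 := by simpa using hcard.symm
    haveI : Subsingleton (Polynomial (ZMod p) ⧸ Ideal.span {g}) := by
      rw [hg, Ideal.span_singleton_one]
      exact Ideal.Quotient.subsingleton_iff.mpr rfl
    haveI : Subsingleton (Polynomial (ZMod p) ⧸ Ideal.span {g})ˣ :=
      ⟨fun a b => Units.ext (Subsingleton.elim _ _)⟩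
    have hbot : ∀ H : Subgroup (Polynomial (ZMod p) ⧸ Ideal.span {g})ˣ, H = ⊥ := by
      intro H
      ext x
      have hx : x = 1 := Subsingleton.elim x 1
      simp [hx, one_mem]
    constructor
    · rw [hk, pow_zero]
      simp only [hbot]
      simp
    · simp only [hbot]
  · -- main case
    obtain ⟨q₀, hq₀⟩ := hsne
    obtain ⟨hq₀m, hq₀i, hq₀d⟩ := hs q₀ hq₀
    have he : 1 ≤ e := by
      rcases Nat.eq_zero_or_pos e with h0 | h
      · exfalso
        have : q₀ = 1 := hq₀m.natDegree_eq_zero.mp (by omega)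
        exact not_irreducible_one (this ▸ hq₀i)
      · exact h
    have hNpos : 0 < p ^ e - 1 := by
      have h2e : 2 ≤ p ^ e := le_trans hp2 (Nat.le_self_pow (by omega) p)
      omega
    set N := p ^ e - 1 with hNdef
    set m := N / (p - 1) with hmdef
    have hdvd : (p - 1) ∣ N := by
      simpa using Nat.sub_dvd_pow_sub_pow (x := p) (y := 1) (n := e)
    have hm : m * (p - 1) = N := Nat.div_mul_cancel hdvd
    have hm0 : 0 < m := by
      rcases Nat.eq_zero_or_pos m with h | h
      · rw [h, zero_mul] at hm; omega
      · exact h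
    -- pairwise coprimality of the irreducible factors
    have hco : ∀ i j : {x // x ∈ s}, i ≠ j →
        IsCoprime (i : Polynomial (ZMod p)) (j : Polynomial (ZMod p)) := by
      intro i j hij
      obtain ⟨him, hii, -⟩ := hs i i.2
      obtain ⟨hjm, hji, -⟩ := hs j j.2
      have hne : (i : Polynomial (ZMod p)) ≠ (j : Polynomial (ZMod p)) := by
        intro h
        exact hij (Subtype.ext h)
      rw [hii.coprime_iff_not_dvd]
      intro hdvd'
      exact hne (Polynomial.eq_of_monic_of_associated him hjm
        (hii.associated_of_dvd hji hdvd'))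
    have hcoI : Pairwise (Function.onFun IsCoprime fun i : {x // x ∈ s} =>
        Ideal.span {(i : Polynomial (ZMod p))}) := fun i j hij =>
      (Ideal.isCoprime_span_singleton_iff _ _).mpr (hco i j hij)
    have hspan : Ideal.span {g} =
        ⨅ i : {x // x ∈ s}, Ideal.span {(i : Polynomial (ZMod p))} := by
      rw [hg, ← Finset.prod_coe_sort s (fun q => q),
        Ideal.iInf_span_singleton fun i j hij => hco i j hij]
    haveI hFact : ∀ i : {x // x ∈ s}, Fact (Irreducible (i : Polynomial (ZMod p))) :=
      fun i => ⟨(hs i i.2).2.1⟩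
    let e1 : (Polynomial (ZMod p) ⧸ Ideal.span {g}) ≃+*
        ∀ i : {x // x ∈ s}, AdjoinRoot (i : Polynomial (ZMod p)) :=
      (Ideal.quotEquivOfEq hspan).trans (Ideal.quotientInfRingEquivPiQuotient _ hcoI)
    haveI hFin : ∀ i : {x // x ∈ s}, Fintype (AdjoinRoot (i : Polynomial (ZMod p))) :=
      fun i => Module.fintypeOfFintype
        (AdjoinRoot.powerBasis (hs i i.2).1.ne_zero).basis
    have hFcard : ∀ i : {x // x ∈ s},
        Nat.card (AdjoinRoot (i : Polynomial (ZMod p)))ˣ = N := by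
      intro i
      rw [Nat.card_units]
      have h1 : Nat.card (AdjoinRoot (i : Polynomial (ZMod p))) = p ^ e := by
        rw [Nat.card_eq_fintype_card, Module.card_eq_pow_finrank (K := ZMod p),
          (AdjoinRoot.powerBasis (hs i i.2).1.ne_zero).finrank,
          AdjoinRoot.powerBasis_dim, (hs i i.2).2.2, ZMod.card]
      rw [h1]
    let u : (Polynomial (ZMod p) ⧸ Ideal.span {g})ˣ ≃*
        ∀ i : {x // x ∈ s}, (AdjoinRoot (i : Polynomial (ZMod p)))ˣ :=
      (Units.mapEquiv e1.toMulEquiv).trans piUnitsEquiv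
    haveI : Finite (Polynomial (ZMod p) ⧸ Ideal.span {g})ˣ :=
      Finite.of_equiv _ u.toEquiv.symm
    have key : ∀ d : ℕ, 0 < d → d ∣ N →
        Nat.card (@powMonoidHom (Polynomial (ZMod p) ⧸ Ideal.span {g})ˣ _ d).ker = d ^ k := by
      intro d hd0 hdN
      have hiff : ∀ x : (Polynomial (ZMod p) ⧸ Ideal.span {g})ˣ,
          x ^ d = 1 ↔ ∀ i : {x // x ∈ s}, (u x i) ^ d = 1 := by
        intro x
        have h1 : x ^ d = 1 ↔ u (x ^ d) = 1 := (MulEquiv.map_eq_one_iff u).symm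
        rw [h1, map_pow, funext_iff]
        apply forall_congr'
        intro i
        simp only [Pi.pow_apply, Pi.one_apply]
      have hcFi : ∀ i : {x // x ∈ s},
          Nat.card {y : (AdjoinRoot (i : Polynomial (ZMod p)))ˣ // y ^ d = 1} = d := by
        intro i
        refine (Nat.card_congr (Equiv.subtypeEquivRight fun y => ?_)).trans
          (card_ker_pow hd0 (by rw [hFcard i]; exact hdN))
        simp [MonoidHom.mem_ker]
      calc Nat.card (@powMonoidHom (Polynomial (ZMod p) ⧸ Ideal.span {g})ˣ _ d).ker
          = Nat.card {x : (Polynomial (ZMod p) ⧸ Ideal.span {g})ˣ // x ^ d = 1} :=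
            Nat.card_congr (Equiv.subtypeEquivRight fun x => by simp [MonoidHom.mem_ker])
        _ = Nat.card (∀ i : {x // x ∈ s},
              {y : (AdjoinRoot (i : Polynomial (ZMod p)))ˣ // y ^ d = 1}) :=
            Nat.card_congr ((Equiv.subtypeEquiv u.toEquiv (fun x => hiff x)).trans
              (Equiv.subtypePiEquivPi))
        _ = ∏ i : {x // x ∈ s},
              Nat.card {y : (AdjoinRoot (i : Polynomial (ZMod p)))ˣ // y ^ d = 1} :=
            Nat.card_pi
        _ = d ^ k := by
            rw [Finset.prod_congr rfl (fun i _ => hcFi i), Finset.prod_const,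
              Finset.card_univ, Fintype.card_coe, hcard]
    refine ⟨key m hm0 ⟨p - 1, hm.symm⟩, ?_⟩
    have hxN : ∀ x : (Polynomial (ZMod p) ⧸ Ideal.span {g})ˣ, x ^ N = 1 := by
      intro x
      apply u.injective
      rw [map_pow, map_one]
      funext i
      simp only [Pi.pow_apply, Pi.one_apply]
      calc (u x i) ^ N
          = (u x i) ^ Nat.card (AdjoinRoot (i : Polynomial (ZMod p)))ˣ := by rw [hFcard i]
        _ = 1 := pow_card_eq_one'
    have hle2 : (@powMonoidHom (Polynomial (ZMod p) ⧸ Ideal.span {g})ˣ _ m).range ≤ (@powMonoidHom (Polynomial (ZMod p) ⧸ Ideal.span {g})ˣ _ (p - 1)).ker := by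
      rintro x ⟨y, rfl⟩
      simp only [MonoidHom.mem_ker, powMonoidHom_apply]
      rw [← pow_mul, hm]
      exact hxN y
    have hNk : Nat.card (Polynomial (ZMod p) ⧸ Ideal.span {g})ˣ = N ^ k := by
      rw [Nat.card_congr u.toEquiv, Nat.card_pi,
        Finset.prod_congr rfl (fun i _ => hFcard i), Finset.prod_const, Finset.card_univ,
        Fintype.card_coe, hcard]
    have hker2 : Nat.card (@powMonoidHom (Polynomial (ZMod p) ⧸ Ideal.span {g})ˣ _ (p - 1)).ker = (p - 1) ^ k :=
      key _ (by omega) hdvd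
    have hkerm := key m hm0 ⟨p - 1, hm.symm⟩
    have hprod : Nat.card (@powMonoidHom (Polynomial (ZMod p) ⧸ Ideal.span {g})ˣ _ m).ker *
        Nat.card (@powMonoidHom (Polynomial (ZMod p) ⧸ Ideal.span {g})ˣ _ m).range = Nat.card (Polynomial (ZMod p) ⧸ Ideal.span {g})ˣ := by
      rw [← Nat.card_congr
          (QuotientGroup.quotientKerEquivRange (@powMonoidHom (Polynomial (ZMod p) ⧸ Ideal.span {g})ˣ _ m)).toEquiv,
        mul_comm, ← Subgroup.card_eq_card_quotient_mul_card_subgroup]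
    have hrange : Nat.card (@powMonoidHom (Polynomial (ZMod p) ⧸ Ideal.span {g})ˣ _ m).range = (p - 1) ^ k := by
      have hNk2 : N ^ k = m ^ k * (p - 1) ^ k := by rw [← mul_pow, hm]
      rw [hkerm, hNk, hNk2] at hprod
      exact Nat.eq_of_mul_eq_mul_left (pow_pos hm0 k) hprod
    exact Subgroup.eq_of_le_of_card_ge hle2 (by rw [hker2, hrange])
end

section
/- Let p be an odd prime and let g ∈ 𝔽_p[Y] be a product of k ≥ 2 distinct monic irreducible polynomials, each of degree e. Let G = {a ∈ R_g^* : a^(p−1) = 1}, and suppose G is the internal direct sum of subgroups G₁ and G₂ of coprime orders, with #G₁ = S^k for some divisor S of p−1. Let ℱ be a subset of R_g^*, let ⟨ℱ⟩ denote the subgroup of R_g^* generated by ℱ, and let σ(ℱ) = {a^((p^e−1)/(p−1)) : a ∈ ℱ} ⊆ G. If #⟨ℱ⟩ · S^k > (p−1) · (p^e−1)^k, then the image of the subgroup ⟨σ(ℱ)⟩ of G under the projection G → G/G₂ is not cyclic. -/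
set_option synthInstance.maxHeartbeats 1000000
set_option maxHeartbeats 1000000

open Polynomial

/-- Every subgroup of the (commutative) unit group of a quotient of `𝔽_p[Y]` is normal.
(This instance only repackages `Subgroup.normal_of_comm`; it is needed because instance
search does not unfold the `CommGroup` structure on the units here.) -/
instance quotUnitsSubgroupNormal (p : ℕ) (g : Polynomial (ZMod p))
    (H : Subgroup (Polynomial (ZMod p) ⧸ Ideal.span {g})ˣ) : H.Normal :=
  ⟨fun n hn g => by rwa [mul_comm g n, mul_inv_cancel_right]⟩

private lemma aux_card_le {Γ Γ' : Type*} [Group Γ] [Finite Γ] [Group Γ'] (φ : Γ →* Γ')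
    (H : Subgroup Γ) : Nat.card H ≤ Nat.card (H.map φ) * Nat.card φ.ker := by
  classical
  let ψ : H →* Γ' := φ.comp H.subtype
  have h1 : Nat.card H = Nat.card (H ⧸ ψ.ker) * Nat.card ψ.ker :=
    Subgroup.card_eq_card_quotient_mul_card_subgroup ψ.ker
  have h2 : Nat.card (H ⧸ ψ.ker) = Nat.card (H.map φ) := by
    have hr : ψ.range = H.map φ := by
      rw [MonoidHom.range_comp, Subgroup.range_subtype]
    rw [← hr]
    exact Nat.card_congr (QuotientGroup.quotientKerEquivRange ψ).toEquiv
  have h3 : Nat.card ψ.ker ≤ Nat.card φ.ker := by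
    refine Nat.card_le_card_of_injective (fun x => ⟨((x : H) : Γ), x.2⟩) ?_
    intro a b hab
    have h := congrArg Subtype.val hab
    exact Subtype.ext (Subtype.ext h)
  rw [h1, h2]
  exact Nat.mul_le_mul_left _ h3

private lemma aux_directSum {Γ : Type*} [Group Γ] (A B C : Subgroup Γ)
    (hA : A ≤ C) (hB : B ≤ C) (hdisj : A ⊓ B = ⊥)
    (hsum : ∀ a ∈ C, ∃ b ∈ A, ∃ c ∈ B, a = b * c) :
    Nat.card C = Nat.card A * Nat.card B := by
  have hbij : Function.Bijective
      (fun x : A × B => (⟨(x.1 : Γ) * (x.2 : Γ), C.mul_mem (hA x.1.2) (hB x.2.2)⟩ : C)) := by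
    constructor
    · rintro ⟨⟨a, ha⟩, ⟨b, hb⟩⟩ ⟨⟨a', ha'⟩, ⟨b', hb'⟩⟩ hEq
      have h' : a * b = a' * b' := congrArg Subtype.val hEq
      have h2 : a'⁻¹ * a = b' * b⁻¹ := by
        rw [inv_mul_eq_iff_eq_mul, ← mul_assoc, ← h', mul_assoc, mul_inv_cancel, mul_one]
      have hmem : a'⁻¹ * a ∈ A ⊓ B :=
        ⟨A.mul_mem (A.inv_mem ha') ha, h2 ▸ B.mul_mem hb' (B.inv_mem hb)⟩
      rw [hdisj, Subgroup.mem_bot] at hmem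
      obtain rfl : a' = a := inv_mul_eq_one.mp hmem
      obtain rfl : b = b' := mul_left_cancel h'
      rfl
    · rintro ⟨a, haC⟩
      obtain ⟨b, hbA, c, hcB, rfl⟩ := hsum a haC
      exact ⟨(⟨b, hbA⟩, ⟨c, hcB⟩), rfl⟩
  rw [← Nat.card_prod (↥A) (↥B)]
  exact (Nat.card_eq_of_bijective _ hbij).symm

private lemma aux_ring (p : ℕ) (hp : p.Prime) (k e : ℕ)
    (s : Finset (Polynomial (ZMod p))) (hcard : s.card = k)
    (hs : ∀ q ∈ s, q.Monic ∧ Irreducible q ∧ q.natDegree = e)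
    (g : Polynomial (ZMod p)) (hg : g = ∏ q ∈ s, q) :
    Finite (Polynomial (ZMod p) ⧸ Ideal.span {g}) ∧
    (∀ x : (Polynomial (ZMod p) ⧸ Ideal.span {g})ˣ, x ^ (p ^ e - 1) = 1) ∧
    (∀ n : ℕ, 0 < n →
      Nat.card (@powMonoidHom (Polynomial (ZMod p) ⧸ Ideal.span {g})ˣ _ n).ker ≤ n ^ k) := by
  classical
  haveI : Fact p.Prime := ⟨hp⟩
  have hirr : ∀ i : {q // q ∈ s}, Irreducible (i : Polynomial (ZMod p)) := fun i => (hs i i.2).2.1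
  have hmon : ∀ i : {q // q ∈ s}, (i : Polynomial (ZMod p)).Monic := fun i => (hs i i.2).1
  have hdeg : ∀ i : {q // q ∈ s}, (i : Polynomial (ZMod p)).natDegree = e := fun i => (hs i i.2).2.2
  have hpairE : Pairwise (Function.onFun IsCoprime (fun i : {q // q ∈ s} =>
      (i : Polynomial (ZMod p)))) := by
    intro i j hij
    rw [Function.onFun, (hirr i).coprime_iff_not_dvd]
    intro hdvd
    exact hij (Subtype.ext (eq_of_monic_of_associated (hmon i) (hmon j)
      ((hirr i).associated_of_dvd (hirr j) hdvd)))
  have hpair : Pairwise (Function.onFun IsCoprime (fun i : {q // q ∈ s} =>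
      Ideal.span {(i : Polynomial (ZMod p))})) := fun i j hij =>
    (Ideal.isCoprime_span_singleton_iff _ _).mpr (hpairE hij)
  have hspan : Ideal.span {g} = ⨅ i : {q // q ∈ s}, Ideal.span {(i : Polynomial (ZMod p))} := by
    rw [Ideal.iInf_span_singleton (I := fun i : {q // q ∈ s} => (i : Polynomial (ZMod p))) (fun i j h => hpairE h), hg, Finset.prod_coe_sort s (fun q => q)]
  let F : {q // q ∈ s} → Type _ :=
    fun i => Polynomial (ZMod p) ⧸ Ideal.span {(i : Polynomial (ZMod p))}
  haveI hmax : ∀ i : {q // q ∈ s}, (Ideal.span {(i : Polynomial (ZMod p))}).IsMaximal := fun i =>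
    PrincipalIdealRing.isMaximal_of_irreducible (hirr i)
  letI fld : ∀ i : {q // q ∈ s}, Field (F i) := fun i => Ideal.Quotient.field _
  let Φ : (Polynomial (ZMod p) ⧸ Ideal.span {g}) ≃+* ∀ i, F i :=
    (Ideal.quotEquivOfEq hspan).trans (Ideal.quotientInfRingEquivPiQuotient _ hpair)
  have hbasis : ∀ i : {q // q ∈ s}, Module.Basis (Fin e) (ZMod p) (F i) := fun i => by
    have hb := AdjoinRoot.powerBasisAux' (hmon i)
    rw [hdeg i] at hb
    exact hb
  have hFequiv : ∀ i : {q // q ∈ s}, F i ≃ (Fin e → ZMod p) := fun i =>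
    (hbasis i).equivFun.toEquiv
  haveI hFfin : ∀ i : {q // q ∈ s}, Finite (F i) := fun i =>
    Finite.of_equiv _ (hFequiv i).symm
  have hFcard : ∀ i : {q // q ∈ s}, Nat.card (F i) = p ^ e := fun i => by
    rw [Nat.card_congr (hFequiv i), Nat.card_eq_fintype_card]
    simp [ZMod.card]
  haveI hRfin : Finite (Polynomial (ZMod p) ⧸ Ideal.span {g}) :=
    Finite.of_equiv _ Φ.toEquiv.symm
  refine ⟨hRfin, ?_, ?_⟩
  · intro x
    have hmap : Φ ((x : Polynomial (ZMod p) ⧸ Ideal.span {g}) ^ (p ^ e - 1)) = Φ 1 := by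
      rw [map_pow, map_one]
      funext i
      haveI : Fintype (F i) := Fintype.ofFinite _
      have hu : IsUnit (Φ (x : Polynomial (ZMod p) ⧸ Ideal.span {g}) i) :=
        x.isUnit.map ((Pi.evalRingHom F i).comp (Φ : (Polynomial (ZMod p) ⧸ Ideal.span {g}) →+* ∀ i, F i))
      have hcardF : Fintype.card (F i) = p ^ e := by
        rw [Fintype.card_eq_nat_card, hFcard]
      have := FiniteField.pow_card_sub_one_eq_one
        (Φ (x : Polynomial (ZMod p) ⧸ Ideal.span {g}) i) hu.ne_zero
      rw [hcardF] at this
      simpa using this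
    have hval := Φ.injective hmap
    exact Units.ext (by simpa using hval)
  · intro n hn
    haveI : ∀ i : {q // q ∈ s}, Fintype (F i) := fun i => Fintype.ofFinite _
    have hinj : Function.Injective
        (fun x : (@powMonoidHom (Polynomial (ZMod p) ⧸ Ideal.span {g})ˣ _ n).ker =>
          (fun i => (⟨Φ (((x : (Polynomial (ZMod p) ⧸ Ideal.span {g})ˣ) :
              Polynomial (ZMod p) ⧸ Ideal.span {g})) i, by
            rw [Polynomial.mem_nthRootsFinset hn]
            have hx1 : ((x : (Polynomial (ZMod p) ⧸ Ideal.span {g})ˣ) :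
                Polynomial (ZMod p) ⧸ Ideal.span {g}) ^ n = 1 := by
              have hx0 : (x : (Polynomial (ZMod p) ⧸ Ideal.span {g})ˣ) ^ n = 1 := x.2
              have := congrArg Units.val hx0
              simpa using this
            calc Φ _ i ^ n = Φ (_ ^ n) i := by rw [map_pow]; rfl
              _ = 1 := by rw [hx1, map_one]; rfl⟩ :
            Polynomial.nthRootsFinset n (1 : F i))) :
          _ → ∀ i : {q // q ∈ s}, {z : F i // z ∈ Polynomial.nthRootsFinset n (1 : F i)}) := by
      intro x y hxy
      have h1 : Φ ((x : (Polynomial (ZMod p) ⧸ Ideal.span {g})ˣ) :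
          Polynomial (ZMod p) ⧸ Ideal.span {g}) =
          Φ ((y : (Polynomial (ZMod p) ⧸ Ideal.span {g})ˣ) :
          Polynomial (ZMod p) ⧸ Ideal.span {g}) := by
        funext i
        exact congrArg Subtype.val (congrFun hxy i)
      exact Subtype.ext (Units.ext (Φ.injective h1))
    have hle := Nat.card_le_card_of_injective _ hinj
    refine hle.trans ?_
    rw [Nat.card_pi]
    have hbound : ∀ i : {q // q ∈ s},
        Nat.card {z : F i // z ∈ Polynomial.nthRootsFinset n (1 : F i)} ≤ n := by
      intro i
      rw [Nat.card_eq_finsetCard]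
      exact (Multiset.toFinset_card_le _).trans (Polynomial.card_nthRoots n 1)
    calc ∏ i : {q // q ∈ s}, Nat.card {z : F i // z ∈ Polynomial.nthRootsFinset n (1 : F i)}
        ≤ ∏ _i : {q // q ∈ s}, n :=
          Finset.prod_le_prod (fun _ _ => Nat.zero_le _) (fun i _ => hbound i)
      _ = n ^ k := by
          rw [Finset.prod_const, Finset.card_univ, Fintype.card_coe, hcard]

/-- Let `p` be an odd prime, `g ∈ 𝔽_p[Y]` a product of `k ≥ 2` distinct
monic irreducible polynomials, each of degree `e`.  Let `G = {a ∈ R_g^* : a^(p−1) = 1}`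
be the internal direct sum of subgroups `G₁, G₂` of coprime orders with `#G₁ = S^k`,
`S ∣ p−1`.  If `ℱ ⊆ R_g^*` satisfies `#⟨ℱ⟩·S^k > (p−1)·(p^e−1)^k`, then the image of
`⟨σ(ℱ)⟩` under the projection modulo `G₂` is not cyclic, where
`σ(a) = a^((p^e−1)/(p−1))`. -/
theorem smoothness_roots_stmt12
    (p : ℕ) (hp : p.Prime) (hodd : Odd p) (k e : ℕ) (hk : 2 ≤ k)
    (s : Finset (Polynomial (ZMod p))) (hcard : s.card = k)
    (hs : ∀ q ∈ s, q.Monic ∧ Irreducible q ∧ q.natDegree = e)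
    (g : Polynomial (ZMod p)) (hg : g = ∏ q ∈ s, q)
    (G₁ G₂ : Subgroup (Polynomial (ZMod p) ⧸ Ideal.span {g})ˣ)
    (hG₁le : G₁ ≤ (@powMonoidHom (Polynomial (ZMod p) ⧸ Ideal.span {g})ˣ _ (p - 1)).ker)
    (hG₂le : G₂ ≤ (@powMonoidHom (Polynomial (ZMod p) ⧸ Ideal.span {g})ˣ _ (p - 1)).ker)
    (hdisj : G₁ ⊓ G₂ = ⊥)
    (hsum : ∀ a ∈ (@powMonoidHom (Polynomial (ZMod p) ⧸ Ideal.span {g})ˣ _ (p - 1)).ker,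
      ∃ b ∈ G₁, ∃ c ∈ G₂, a = b * c)
    (hcop : Nat.Coprime (Nat.card G₁) (Nat.card G₂))
    (S : ℕ) (hS : S ∣ p - 1) (hG₁card : Nat.card G₁ = S ^ k)
    (ℱ : Set (Polynomial (ZMod p) ⧸ Ideal.span {g})ˣ)
    (hbig : Nat.card (Subgroup.closure ℱ) * S ^ k > (p - 1) * (p ^ e - 1) ^ k) :
    ¬ IsCyclic ((Subgroup.closure
        ((fun a : (Polynomial (ZMod p) ⧸ Ideal.span {g})ˣ =>
          a ^ ((p ^ e - 1) / (p - 1))) '' ℱ)).map (QuotientGroup.mk' G₂)) := by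
  classical
  haveI : Fact p.Prime := ⟨hp⟩
  have hp2 : 2 ≤ p := hp.two_le
  have hp1 : 0 < p - 1 := by omega
  have he : 0 < e := by
    obtain ⟨q, hq⟩ := Finset.card_pos.mp (by omega : 0 < s.card)
    have h1 := (hs q hq).2.1.natDegree_pos
    have h2 := (hs q hq).2.2
    omega
  obtain ⟨hfin, hexp, hker⟩ := aux_ring p hp k e s hcard hs g hg
  haveI := hfin
  have hpe1 : 0 < p ^ e - 1 := by
    have h := Nat.pow_le_pow_right (by omega : 1 ≤ p) he
    simp only [pow_one] at h
    have := Nat.one_lt_pow (by omega) (by omega : 1 < p) (n := e)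
    omega
  have hdvd : (p - 1) ∣ (p ^ e - 1) := by
    simpa using Nat.sub_dvd_pow_sub_pow p 1 e
  set m := (p ^ e - 1) / (p - 1) with hmdef
  have hmmul : m * (p - 1) = p ^ e - 1 := Nat.div_mul_cancel hdvd
  have hm0 : 0 < m := by
    rcases Nat.eq_zero_or_pos m with h | h
    · rw [h, zero_mul] at hmmul; omega
    · exact h
  set φ := @powMonoidHom (Polynomial (ZMod p) ⧸ Ideal.span {g})ˣ _ m with hφ
  set ψ := QuotientGroup.mk' G₂ with hψ
  set H := Subgroup.closure ℱ with hH
  intro hcyc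
  have hKeq : (Subgroup.closure ((fun a : (Polynomial (ZMod p) ⧸ Ideal.span {g})ˣ => a ^ m) '' ℱ)) = Subgroup.map φ H :=
    (MonoidHom.map_closure φ ℱ).symm
  rw [hKeq] at hcyc
  set K := Subgroup.map φ H with hK
  have hKle : ∀ x ∈ K, x ^ (p - 1) = 1 := by
    intro x hx
    obtain ⟨a, _, rfl⟩ := hx
    show (a ^ m) ^ (p - 1) = 1
    rw [← pow_mul, hmmul]
    exact hexp a
  haveI : Finite ((Polynomial (ZMod p) ⧸ Ideal.span {g})ˣ ⧸ G₂) := Quotient.finite _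
  have hQle : Nat.card (K.map ψ) ≤ p - 1 := by
    obtain ⟨x, hxgen⟩ := hcyc
    have hord : orderOf x = Nat.card (K.map ψ) :=
      orderOf_eq_card_of_forall_mem_zpowers hxgen
    have hx1 : (x : (Polynomial (ZMod p) ⧸ Ideal.span {g})ˣ ⧸ G₂) ^ (p - 1) = 1 := by
      obtain ⟨a, haK, ha⟩ := x.2
      rw [← ha, ← map_pow, hKle a haK, map_one]
    have hx1' : x ^ (p - 1) = 1 := Subtype.ext (by simpa using hx1)
    have hdvd' := orderOf_dvd_of_pow_eq_one hx1'
    rw [hord] at hdvd'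
    exact Nat.le_of_dvd hp1 hdvd'
  have h1 : Nat.card H ≤ Nat.card K * Nat.card φ.ker := aux_card_le φ H
  have h2 : Nat.card φ.ker ≤ m ^ k := hker m hm0
  have h3 : Nat.card K ≤ Nat.card (K.map ψ) * Nat.card ψ.ker := aux_card_le ψ K
  have hkerψ : ψ.ker = G₂ := QuotientGroup.ker_mk' G₂
  have h4 : Nat.card K ≤ (p - 1) * Nat.card G₂ := by
    rw [hkerψ] at h3
    exact h3.trans (Nat.mul_le_mul_right _ hQle)
  have hG : Nat.card (@powMonoidHom (Polynomial (ZMod p) ⧸ Ideal.span {g})ˣ _ (p - 1)).ker = S ^ k * Nat.card G₂ := by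
    rw [← hG₁card]
    exact aux_directSum G₁ G₂ _ hG₁le hG₂le hdisj hsum
  have h5 : S ^ k * Nat.card G₂ ≤ (p - 1) ^ k := by
    rw [← hG]
    exact hker (p - 1) hp1
  have hfinal : Nat.card H * S ^ k ≤ (p - 1) * (p ^ e - 1) ^ k := by
    have hA : Nat.card H ≤ (p - 1) * Nat.card G₂ * m ^ k :=
      h1.trans (Nat.mul_le_mul h4 h2)
    calc Nat.card H * S ^ k
        ≤ ((p - 1) * Nat.card G₂ * m ^ k) * S ^ k := Nat.mul_le_mul_right _ hA
      _ = (p - 1) * m ^ k * (S ^ k * Nat.card G₂) := by ring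
      _ ≤ (p - 1) * m ^ k * (p - 1) ^ k := Nat.mul_le_mul_left _ h5
      _ = (p - 1) * (m * (p - 1)) ^ k := by rw [mul_pow]; ring
      _ = (p - 1) * (p ^ e - 1) ^ k := by rw [hmmul]
  omega
end
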